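/- The doubling constant of the metric space of (equivalence classes of) real-valued time series of complexity at most m under the discrete Fréchet distance is at least 2^m: there is a time series x ∈ ℝ^m and a radius r > 0 such that the ball of radius r around x contains 2^m time series, no two of which lie in a common ball of radius r/2. -/

import Mathlib

open scoped Classical

def IsStep (p q : ℕ × ℕ) : Prop :=
  (q.1 = p.1 + 1 ∧ q.2 = p.2) ∨ (q.1 = p.1 ∧ q.2 = p.2 + 1) ∨
    (q.1 = p.1 + 1 ∧ q.2 = p.2 + 1)

def IsTraversal (m ℓ : ℕ) (T : List (ℕ × ℕ)) : Prop :=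
  T.head? = some (1, 1) ∧ T.getLast? = some (m, ℓ) ∧ T.Chain' IsStep

noncomputable def travCost (x y : ℕ → ℝ) (T : List (ℕ × ℕ)) : ℝ :=
  (T.map (fun p => |x p.1 - y p.2|)).foldr max 0

noncomputable def dF (m ℓ : ℕ) (x y : ℕ → ℝ) : ℝ :=
  sInf {c | ∃ T, IsTraversal m ℓ T ∧ travCost x y T = c}

-- auxiliary lemmas

lemma step_le {p q : ℕ × ℕ} (h : IsStep p q) :
    p.1 ≤ q.1 ∧ q.1 ≤ p.1 + 1 ∧ p.2 ≤ q.2 ∧ q.2 ≤ p.2 + 1 := by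
  rcases h with ⟨h1, h2⟩ | ⟨h1, h2⟩ | ⟨h1, h2⟩ <;> omega

lemma mem_bounds : ∀ (T : List (ℕ × ℕ)), T.Chain' IsStep → ∀ s t : ℕ × ℕ,
    T.head? = some s → T.getLast? = some t → ∀ p ∈ T,
    s.1 ≤ p.1 ∧ p.1 ≤ t.1 ∧ s.2 ≤ p.2 ∧ p.2 ≤ t.2 := by
  intro T
  induction T with
  | nil => simp
  | cons a l ih =>
    cases l with
    | nil =>
      intro _ s t hs ht p hp
      simp at hs ht hp
      subst hs; subst ht; subst hp
      omega
    | cons b l' =>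
      intro hch s t hs ht p hp
      simp only [List.Chain', List.isChain_cons_cons] at hch
      simp only [List.head?_cons, Option.some_inj] at hs
      rw [List.getLast?_cons_cons] at ht
      have hstep := step_le hch.1
      have hb := ih hch.2 b t rfl ht b List.mem_cons_self
      rcases List.mem_cons.mp hp with rfl | hp'
      · subst hs; omega
      · have := ih hch.2 b t rfl ht p hp'
        subst hs; omega

lemma cover_fst : ∀ (T : List (ℕ × ℕ)), T.Chain' IsStep → ∀ s t : ℕ × ℕ,
    T.head? = some s → T.getLast? = some t → ∀ i, s.1 ≤ i → i ≤ t.1 →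
    ∃ j, (i, j) ∈ T := by
  intro T
  induction T with
  | nil => simp
  | cons a l ih =>
    cases l with
    | nil =>
      intro _ s t hs ht i h1 h2
      simp at hs ht
      subst hs; subst ht
      have : i = a.1 := le_antisymm h2 h1
      exact ⟨a.2, by simp [this]⟩
    | cons b l' =>
      intro hch s t hs ht i h1 h2
      simp only [List.Chain', List.isChain_cons_cons] at hch
      simp only [List.head?_cons, Option.some_inj] at hs
      rw [List.getLast?_cons_cons] at ht
      subst hs
      by_cases hia : i = a.1
      · exact ⟨a.2, by subst hia; simp⟩
      · have hstep := step_le hch.1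
        obtain ⟨j, hj⟩ := ih hch.2 b t rfl ht i (by omega) h2
        exact ⟨j, List.mem_cons_of_mem _ hj⟩

lemma cover_snd : ∀ (T : List (ℕ × ℕ)), T.Chain' IsStep → ∀ s t : ℕ × ℕ,
    T.head? = some s → T.getLast? = some t → ∀ j, s.2 ≤ j → j ≤ t.2 →
    ∃ i, (i, j) ∈ T := by
  intro T
  induction T with
  | nil => simp
  | cons a l ih =>
    cases l with
    | nil =>
      intro _ s t hs ht j h1 h2
      simp at hs ht
      subst hs; subst ht
      have : j = a.2 := le_antisymm h2 h1
      exact ⟨a.1, by simp [this]⟩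
    | cons b l' =>
      intro hch s t hs ht j h1 h2
      simp only [List.Chain', List.isChain_cons_cons] at hch
      simp only [List.head?_cons, Option.some_inj] at hs
      rw [List.getLast?_cons_cons] at ht
      subst hs
      by_cases hja : j = a.2
      · exact ⟨a.1, by subst hja; simp⟩
      · have hstep := step_le hch.1
        obtain ⟨i, hi⟩ := ih hch.2 b t rfl ht j (by omega) h2
        exact ⟨i, List.mem_cons_of_mem _ hi⟩

lemma trav_snoc {a b p q : ℕ} {T : List (ℕ × ℕ)} (h : IsTraversal a b T)
    (hst : IsStep (a, b) (p, q)) : IsTraversal p q (T ++ [(p, q)]) := by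
  obtain ⟨h1, h2, h3⟩ := h
  refine ⟨?_, ?_, ?_⟩
  · cases T with
    | nil => simp at h1
    | cons x l => simpa using h1
  · simp [List.getLast?_concat]
  · simp only [List.Chain', List.isChain_append]
    refine ⟨h3, List.isChain_singleton _, ?_⟩
    intro x hx y hy
    rw [h2] at hx
    simp at hx hy
    subst hx; subst hy
    exact hst

lemma exists_trav1 (ℓ : ℕ) (hl : 1 ≤ ℓ) : ∃ T, IsTraversal 1 ℓ T := by
  induction ℓ with
  | zero => omega
  | succ n ih =>
    rcases Nat.eq_or_lt_of_le hl with h | h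
    · exact ⟨[(1, 1)], by simp [IsTraversal, ← h, List.Chain']⟩
    · obtain ⟨T, hT⟩ := ih (by omega)
      exact ⟨T ++ [(1, n + 1)], trav_snoc hT (by right; left; simp)⟩

lemma exists_trav (m ℓ : ℕ) (hm : 1 ≤ m) (hl : 1 ≤ ℓ) : ∃ T, IsTraversal m ℓ T := by
  induction m with
  | zero => omega
  | succ n ih =>
    rcases Nat.eq_or_lt_of_le hm with h | h
    · exact (exists_trav1 ℓ hl).imp fun T hT => by rwa [← h]
    · obtain ⟨T, hT⟩ := ih (by omega)
      exact ⟨T ++ [(n + 1, ℓ)], trav_snoc hT (by left; simp)⟩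

lemma exists_diag (k : ℕ) (hk : 1 ≤ k) :
    ∃ T, IsTraversal k k T ∧ ∀ p ∈ T, p.1 = p.2 := by
  induction k with
  | zero => omega
  | succ n ih =>
    rcases Nat.eq_or_lt_of_le hk with h | h
    · exact ⟨[(1, 1)], by simp [IsTraversal, ← h, List.Chain']⟩
    · obtain ⟨T, hT, hd⟩ := ih (by omega)
      refine ⟨T ++ [(n + 1, n + 1)], trav_snoc hT (by right; right; simp), ?_⟩
      intro p hp
      rcases List.mem_append.mp hp with h' | h'
      · exact hd p h'
      · simp at h'; subst h'; rfl

lemma foldr_max_nonneg (l : List ℝ) : 0 ≤ l.foldr max 0 := by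
  induction l with
  | nil => simp
  | cons a l ih => exact le_max_of_le_right ih

lemma le_foldr_max {l : List ℝ} {a : ℝ} (h : a ∈ l) : a ≤ l.foldr max 0 := by
  induction l with
  | nil => simp at h
  | cons b l ih =>
    rcases List.mem_cons.mp h with rfl | h'
    · exact le_max_left _ _
    · exact le_trans (ih h') (le_max_right _ _)

lemma foldr_max_le {l : List ℝ} {b : ℝ} (hb : 0 ≤ b) (h : ∀ a ∈ l, a ≤ b) :
    l.foldr max 0 ≤ b := by
  induction l with
  | nil => simpa
  | cons a l ih =>
    exact max_le (h a List.mem_cons_self) (ih fun x hx => h x (List.mem_cons_of_mem _ hx))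

lemma travCost_nonneg (x y : ℕ → ℝ) (T : List (ℕ × ℕ)) : 0 ≤ travCost x y T :=
  foldr_max_nonneg _

lemma mem_le_travCost {x y : ℕ → ℝ} {T : List (ℕ × ℕ)} {p : ℕ × ℕ} (hp : p ∈ T) :
    |x p.1 - y p.2| ≤ travCost x y T :=
  le_foldr_max (List.mem_map_of_mem hp)

lemma travCost_le {x y : ℕ → ℝ} {T : List (ℕ × ℕ)} {b : ℝ} (hb : 0 ≤ b)
    (h : ∀ p ∈ T, |x p.1 - y p.2| ≤ b) : travCost x y T ≤ b := by
  apply foldr_max_le hb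
  intro a ha
  obtain ⟨p, hp, rfl⟩ := List.mem_map.mp ha
  exact h p hp

lemma dF_bddBelow (m ℓ : ℕ) (x y : ℕ → ℝ) :
    BddBelow {c | ∃ T, IsTraversal m ℓ T ∧ travCost x y T = c} := by
  refine ⟨0, ?_⟩
  rintro c ⟨T, _, rfl⟩
  exact travCost_nonneg x y T

lemma dF_le {m ℓ : ℕ} {x y : ℕ → ℝ} {T : List (ℕ × ℕ)} (h : IsTraversal m ℓ T)
    {b : ℝ} (hb : travCost x y T ≤ b) : dF m ℓ x y ≤ b :=
  le_trans (csInf_le (dF_bddBelow m ℓ x y) ⟨T, h, rfl⟩) hb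

noncomputable def sgn (m : ℕ) (σ : Fin m → Bool) (i : ℕ) : ℝ :=
  if h : 1 ≤ i ∧ i ≤ m then (if σ ⟨i - 1, by omega⟩ then 1 else -1) else 0

noncomputable def pt (m : ℕ) (σ : Fin m → Bool) : ℕ → ℝ :=
  fun i => 10 * (i : ℝ) + sgn m σ i

lemma abs_sgn_le (m : ℕ) (σ : Fin m → Bool) (i : ℕ) : |sgn m σ i| ≤ 1 := by
  unfold sgn
  split_ifs <;> norm_num

lemma sgn_at (m : ℕ) (σ : Fin m → Bool) (k : Fin m) :
    sgn m σ ((k : ℕ) + 1) = if σ k then 1 else -1 := by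
  have hk := k.isLt
  unfold sgn
  rw [dif_pos ⟨by omega, by omega⟩]
  congr 1

lemma pt_inj (m : ℕ) : Function.Injective (pt m) := by
  intro σ σ' h
  funext k
  have hk := congrFun h ((k : ℕ) + 1)
  simp only [pt] at hk
  have h2 : sgn m σ ((k : ℕ) + 1) = sgn m σ' ((k : ℕ) + 1) := by linarith
  rw [sgn_at, sgn_at] at h2
  cases hσ : σ k <;> cases hσ' : σ' k <;> simp [hσ, hσ'] at h2 ⊢ <;> norm_num at h2

/-- Doubling lower bound: there is a center `x` of complexity m and a radius r
such that the r-ball around `x` contains 2^m series of complexity m, no two of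
which lie in a common ball of radius r/2 (centered at any series of complexity
at most m). -/
theorem stmt13 (m : ℕ) (hm : 1 ≤ m) :
    ∃ (x : ℕ → ℝ) (r : ℝ), 0 < r ∧ ∃ S : Finset (ℕ → ℝ), S.card = 2 ^ m ∧
      (∀ y ∈ S, dF m m x y ≤ r) ∧
      ∀ y ∈ S, ∀ y' ∈ S, y ≠ y' →
        ∀ m' : ℕ, 1 ≤ m' → m' ≤ m → ∀ c : ℕ → ℝ,
          ¬(dF m m' y c ≤ r / 2 ∧ dF m m' y' c ≤ r / 2) := by
  refine ⟨fun i => 10 * (i : ℝ), 1, one_pos, Finset.image (pt m) Finset.univ, ?_, ?_, ?_⟩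
  · rw [Finset.card_image_of_injective _ (pt_inj m)]
    simp
  · rintro y hy
    obtain ⟨σ, -, rfl⟩ := Finset.mem_image.mp hy
    obtain ⟨T, hT, hdiag⟩ := exists_diag m hm
    apply dF_le hT
    apply travCost_le zero_le_one
    intro p hp
    have h1 := hdiag p hp
    have : 10 * (p.1 : ℝ) - pt m σ p.2 = -(sgn m σ p.2) := by
      simp [pt, h1]
    rw [this, abs_neg]
    exact abs_sgn_le m σ p.2
  · rintro y hy y' hy' hne m' hm'1 hm'2 c ⟨h1, h2⟩
    obtain ⟨σ, -, rfl⟩ := Finset.mem_image.mp hy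
    obtain ⟨σ', -, rfl⟩ := Finset.mem_image.mp hy'
    obtain ⟨k, hk⟩ : ∃ k, σ k ≠ σ' k := by
      by_contra hcon
      push_neg at hcon
      exact hne (congrArg (pt m) (funext hcon))
    have hAne : {c0 | ∃ T, IsTraversal m m' T ∧ travCost (pt m σ) c T = c0}.Nonempty := by
      obtain ⟨T, hT⟩ := exists_trav m m' hm hm'1
      exact ⟨_, T, hT, rfl⟩
    have hBne : {c0 | ∃ T, IsTraversal m m' T ∧ travCost (pt m σ') c T = c0}.Nonempty := by
      obtain ⟨T, hT⟩ := exists_trav m m' hm hm'1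
      exact ⟨_, T, hT, rfl⟩
    obtain ⟨a, ⟨T, hT, rfl⟩, hTc⟩ :=
      exists_lt_of_csInf_lt hAne (lt_of_le_of_lt h1 (by norm_num : (1:ℝ)/2 < 5/8))
    obtain ⟨a', ⟨T', hT', rfl⟩, hTc'⟩ :=
      exists_lt_of_csInf_lt hBne (lt_of_le_of_lt h2 (by norm_num : (1:ℝ)/2 < 5/8))
    obtain ⟨hTh, hTl, hTch⟩ := hT
    obtain ⟨hT'h, hT'l, hT'ch⟩ := hT'
    have hkm := k.isLt
    obtain ⟨j, hij⟩ := cover_fst T hTch _ _ hTh hTl ((k : ℕ) + 1) (by simp) (by omega)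
    have hjb := mem_bounds T hTch _ _ hTh hTl _ hij
    simp only at hjb
    obtain ⟨i', hi'⟩ := cover_snd T' hT'ch _ _ hT'h hT'l j hjb.2.2.1 hjb.2.2.2
    have hib := mem_bounds T' hT'ch _ _ hT'h hT'l _ hi'
    simp only at hib
    have e1 : |pt m σ ((k : ℕ) + 1) - c j| ≤ travCost (pt m σ) c T := mem_le_travCost hij
    have e2 : |pt m σ' i' - c j| ≤ travCost (pt m σ') c T' := mem_le_travCost hi'
    have key : |pt m σ ((k : ℕ) + 1) - pt m σ' i'| ≤ 5/4 := by
      have := abs_sub_le (pt m σ ((k : ℕ) + 1)) (c j) (pt m σ' i')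
      have h3 : |c j - pt m σ' i'| = |pt m σ' i' - c j| := abs_sub_comm _ _
      linarith
    have hkey := abs_le.mp key
    have hA : pt m σ ((k : ℕ) + 1) = 10 * ((k : ℕ) + 1 : ℝ) + (if σ k then 1 else -1) := by
      simp [pt, sgn_at]
    have hB : pt m σ' i' = 10 * (i' : ℝ) + sgn m σ' i' := rfl
    have hB1 := abs_le.mp (abs_sgn_le m σ' i')
    rcases lt_trichotomy i' ((k : ℕ) + 1) with hlt | heq | hgt
    · have hcast : (i' : ℝ) + 1 ≤ ((k : ℕ) + 1 : ℝ) := by exact_mod_cast hlt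
      have hA1 := abs_le.mp (abs_sgn_le m σ ((k : ℕ) + 1))
      have hAe : pt m σ ((k : ℕ) + 1) = 10 * (((k : ℕ) : ℝ) + 1) + sgn m σ ((k : ℕ) + 1) := by
        unfold pt; push_cast; ring
      rw [hAe, hB] at hkey
      push_cast at hkey hcast
      linarith [hkey.1, hkey.2]
    · subst heq
      have hA' : pt m σ' ((k : ℕ) + 1) = 10 * ((k : ℕ) + 1 : ℝ) + (if σ' k then 1 else -1) := by
        simp [pt, sgn_at]
      rw [hA, hA'] at hkey
      cases hσ : σ k <;> cases hσ' : σ' k <;> simp [hσ, hσ'] at hkey hk <;>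
        linarith [hkey.1, hkey.2]
    · have hcast : ((k : ℕ) + 1 : ℝ) + 1 ≤ (i' : ℝ) := by exact_mod_cast hgt
      have hA1 := abs_le.mp (abs_sgn_le m σ ((k : ℕ) + 1))
      have hAe : pt m σ ((k : ℕ) + 1) = 10 * (((k : ℕ) : ℝ) + 1) + sgn m σ ((k : ℕ) + 1) := by
        unfold pt; push_cast; ring
      rw [hAe, hB] at hkey
      push_cast at hkey hcast
      linarith [hkey.1, hkey.2]
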